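/- Let Q_1, ..., Q_n be n×n positive definite matrices with Σ_{i=1}^n tr Q_i = n. Let H = {x ∈ ℝ^n : Σ x_i = 0} and f(x_1,...,x_n) = ln det(Σ_{i=1}^n e^{x_i} Q_i) on H. Suppose (ξ_1, ..., ξ_n) ∈ H is a minimum point of f on H, let S be an invertible matrix with S*S = Σ_i e^{ξ_i} Q_i, set T = S^{-1}, τ_i = e^{ξ_i}, and B_i = τ_i T* Q_i T. Then D(B_1, ..., B_n) ≥ D(Q_1, ..., Q_n). -/

import Mathlib

open Matrix

/-- The mixed discriminant of `n` real `n x n` matrices: the coefficient of the monomial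
`t_1 t_2 ... t_n` in `det (t_1 Q_1 + ... + t_n Q_n)`. -/
noncomputable def mixedDiscriminant {n : ℕ} (Q : Fin n → Matrix (Fin n) (Fin n) ℝ) : ℝ :=
  MvPolynomial.coeff (∑ i : Fin n, Finsupp.single i 1)
    (Matrix.det (∑ i, (MvPolynomial.X i : MvPolynomial (Fin n) ℝ) • (Q i).map MvPolynomial.C))

lemma bij_of_sum_single {n : ℕ} (φ : Fin n → Fin n)
    (h : ∑ j, Finsupp.single (φ j) (1:ℕ) = ∑ i, Finsupp.single i 1) :
    Function.Bijective φ := by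
  classical
  have hcard : ∀ i : Fin n, (Finset.univ.filter fun j => φ j = i).card = 1 := by
    intro i
    have := congrArg (fun f : Fin n →₀ ℕ => f i) h
    simp only [Finsupp.finset_sum_apply, Finsupp.single_apply] at this
    rw [Finset.card_filter]
    rw [Finset.sum_ite_eq' Finset.univ i (fun _ => (1:ℕ))] at this
    simp only [Finset.mem_univ, if_true] at this
    rw [this]
  have hinj : Function.Injective φ := by
    intro a b hab
    have h1 := hcard (φ a)
    have ha : a ∈ Finset.univ.filter fun j => φ j = φ a := by simp
    have hb : b ∈ Finset.univ.filter fun j => φ j = φ a := by simp [hab]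
    exact Finset.card_le_one.mp h1.le a ha b hb |>.symm ▸ rfl
  exact ⟨hinj, Finite.surjective_of_injective hinj⟩


lemma prod_X_comp {n : ℕ} (φ : Fin n → Fin n) :
    (∏ j, (MvPolynomial.X (φ j) : MvPolynomial (Fin n) ℝ))
      = MvPolynomial.monomial (∑ j, Finsupp.single (φ j) 1) 1 := by
  classical
  induction (Finset.univ : Finset (Fin n)) using Finset.cons_induction with
  | empty => simp
  | cons a s ha ih =>
      rw [Finset.prod_cons, Finset.sum_cons, ih, ← pow_one (MvPolynomial.X (φ a)),
        MvPolynomial.X_pow_eq_monomial, MvPolynomial.monomial_mul, one_mul]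

lemma mixedDiscriminant_eq_sum_perm {n : ℕ} (M : Fin n → Matrix (Fin n) (Fin n) ℝ) :
    mixedDiscriminant M
      = ∑ σ : Equiv.Perm (Fin n), (Matrix.of fun p j => M (σ j) p j).det := by
  classical
  unfold mixedDiscriminant
  rw [Matrix.det_apply']
  have hentry : ∀ (p j : Fin n),
      (∑ i, (MvPolynomial.X i : MvPolynomial (Fin n) ℝ) • (M i).map MvPolynomial.C) p j
        = ∑ i, (MvPolynomial.X i : MvPolynomial (Fin n) ℝ) * MvPolynomial.C (M i p j) := by
    intro p j
    simp [Matrix.sum_apply, Matrix.smul_apply, smul_eq_mul, Matrix.map_apply]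
  simp_rw [hentry, Finset.prod_univ_sum, Finset.mul_sum, MvPolynomial.coeff_sum]
  have hterm : ∀ (π : Equiv.Perm (Fin n)) (φ : Fin n → Fin n),
      MvPolynomial.coeff (∑ i : Fin n, Finsupp.single i 1)
        ((((Equiv.Perm.sign π : ℤ) : MvPolynomial (Fin n) ℝ)) *
          ∏ j, (MvPolynomial.X (φ j) * MvPolynomial.C (M (φ j) (π j) j)))
        = if (∑ j, Finsupp.single (φ j) 1) = (∑ i : Fin n, Finsupp.single i 1)
            then ((Equiv.Perm.sign π : ℤ) : ℝ) * ∏ j, M (φ j) (π j) j else 0 := by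
    intro π φ
    rw [Finset.prod_mul_distrib, prod_X_comp, ← map_prod, MvPolynomial.C_apply,
      MvPolynomial.monomial_mul, ← map_intCast (MvPolynomial.C : ℝ →+* MvPolynomial (Fin n) ℝ),
      MvPolynomial.C_mul_monomial, MvPolynomial.coeff_monomial]
    simp [mul_ite]
  simp_rw [hterm]
  have hφ : ∀ π : Equiv.Perm (Fin n),
      (∑ φ ∈ Fintype.piFinset (fun _ : Fin n => (Finset.univ : Finset (Fin n))),
        if (∑ j, Finsupp.single (φ j) 1) = (∑ i : Fin n, Finsupp.single i 1)
          then ((Equiv.Perm.sign π : ℤ) : ℝ) * ∏ j, M (φ j) (π j) j else 0)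
      = ∑ σ : Equiv.Perm (Fin n), ((Equiv.Perm.sign π : ℤ) : ℝ) * ∏ j, M (σ j) (π j) j := by
    intro π
    rw [← Finset.sum_filter]
    refine Finset.sum_bij' (fun φ hφ => Equiv.ofBijective φ ?_)
      (fun σ _ => ⇑σ) ?_ ?_ ?_ ?_ ?_
    · exact bij_of_sum_single φ (Finset.mem_filter.mp hφ).2
    · intro φ hφ; exact Finset.mem_univ _
    · intro σ _
      refine Finset.mem_filter.mpr ⟨by simp, ?_⟩
      exact Equiv.sum_comp σ (fun i => Finsupp.single i 1)
    · intro φ hφ; rfl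
    · intro σ _; ext j; rfl
    · intro φ hφ; rfl
  simp_rw [hφ]
  rw [Finset.sum_comm]
  refine Finset.sum_congr rfl fun σ _ => ?_
  rw [Matrix.det_apply']
  refine Finset.sum_congr rfl fun π _ => ?_
  simp [Matrix.of_apply]

lemma mixedDiscriminant_sum {n : ℕ} (W : Fin n → Fin n → Matrix (Fin n) (Fin n) ℝ) :
    mixedDiscriminant (fun i => ∑ k, W i k)
      = ∑ κ : Fin n → Fin n, mixedDiscriminant (fun i => W i (κ i)) := by
  classical
  simp_rw [mixedDiscriminant_eq_sum_perm]
  rw [Finset.sum_comm]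
  refine Finset.sum_congr rfl fun σ _ => ?_
  have h1 : (Matrix.of fun p j => (∑ k, W (σ j) k) p j).det
      = ∑ r : Fin n → Fin n, (Matrix.of fun p j => W (σ j) (r j) p j).det := by
    rw [← Matrix.det_transpose]
    have : (Matrix.of fun p j => (∑ k, W (σ j) k) p j)ᵀ
        = fun j => ∑ k : Fin n, (fun p => W (σ j) k p j) := by
      ext j p; simp [Matrix.sum_apply]
    rw [this]
    have := (Matrix.detRowAlternating (n := Fin n) (R := ℝ)).toMultilinearMap.map_sum
      (g := fun j k => (fun p => W (σ j) k p j))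
    refine this.trans (Finset.sum_congr rfl fun r _ => ?_)
    rw [← Matrix.det_transpose (Matrix.of fun p j => W (σ j) (r j) p j)]
    rfl
  rw [h1]
  refine Fintype.sum_equiv (Equiv.arrowCongr σ (Equiv.refl (Fin n))) _ _ fun r => ?_
  congr 1
  ext p j
  simp [Equiv.arrowCongr]

lemma mixedDiscriminant_rankOne {n : ℕ} (v : Fin n → Fin n → ℝ) :
    mixedDiscriminant (fun i => Matrix.vecMulVec (v i) (v i))
      = (Matrix.of fun p i => v i p).det ^ 2 := by
  classical
  rw [mixedDiscriminant_eq_sum_perm]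
  have h : ∀ σ : Equiv.Perm (Fin n),
      (Matrix.of fun p j => Matrix.vecMulVec (v (σ j)) (v (σ j)) p j)
        = ((Matrix.of fun p i => v i p).submatrix id ⇑σ)
            * Matrix.diagonal (fun j => v (σ j) j) := by
    intro σ; ext p j
    simp [Matrix.mul_diagonal, Matrix.vecMulVec_apply, mul_comm]
  simp_rw [h, Matrix.det_mul, Matrix.det_permute', Matrix.det_diagonal]
  have h2 : (Matrix.of fun p i => v i p).det
      = ∑ σ : Equiv.Perm (Fin n),
          ((Equiv.Perm.sign σ : ℤ) : ℝ) * ∏ j, v (σ j) j := by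
    conv_lhs => rw [← Matrix.det_transpose, Matrix.det_apply']
    rfl
  calc ∑ σ : Equiv.Perm (Fin n),
        ((Equiv.Perm.sign σ : ℤ) : ℝ) * (Matrix.of fun p i => v i p).det
          * ∏ j, v (σ j) j
      = (Matrix.of fun p i => v i p).det
          * ∑ σ : Equiv.Perm (Fin n),
              ((Equiv.Perm.sign σ : ℤ) : ℝ) * ∏ j, v (σ j) j := by
        rw [Finset.mul_sum]; exact Finset.sum_congr rfl fun σ _ => by ring
    _ = (Matrix.of fun p i => v i p).det ^ 2 := by rw [← h2]; ring

lemma posSemidef_decomp {n : ℕ} {Q : Matrix (Fin n) (Fin n) ℝ} (hQ : Q.PosSemidef) :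
    ∃ w : Fin n → Fin n → ℝ, Q = ∑ k, Matrix.vecMulVec (w k) (w k) := by
  obtain ⟨B, hB⟩ : ∃ B : Matrix (Fin n) (Fin n) ℝ, Q = star B * B := by
    open scoped MatrixOrder in exact CStarAlgebra.nonneg_iff_eq_star_mul_self.mp hQ.nonneg
  refine ⟨fun k => B k, ?_⟩
  ext p j
  simp [hB, Matrix.star_eq_conjTranspose, Matrix.mul_apply, Matrix.conjTranspose_apply, Matrix.sum_apply,
    Matrix.vecMulVec_apply]

lemma smul_conj_vecMulVec {n : ℕ} {τ : ℝ} (hτ : 0 ≤ τ) (T : Matrix (Fin n) (Fin n) ℝ)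
    (v : Fin n → ℝ) :
    τ • (Tᵀ * Matrix.vecMulVec v v * T)
      = Matrix.vecMulVec (Real.sqrt τ • (Tᵀ *ᵥ v)) (Real.sqrt τ • (Tᵀ *ᵥ v)) := by
  ext p j
  have h1 : (Tᵀ * Matrix.vecMulVec v v * T) p j
      = (∑ a, T a p * v a) * (∑ b, T b j * v b) := by
    simp only [Matrix.mul_apply, Matrix.vecMulVec_apply, Matrix.transpose_apply,
      Finset.sum_mul, Finset.mul_sum]
    exact Finset.sum_congr rfl fun a _ => Finset.sum_congr rfl fun b _ => by ring
  have h2 : ∀ p, (Real.sqrt τ • (Tᵀ *ᵥ v)) p = Real.sqrt τ * ∑ a, T a p * v a := by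
    intro p
    simp [Matrix.mulVec, dotProduct, Matrix.transpose_apply]
  rw [Matrix.smul_apply, h1, Matrix.vecMulVec_apply, h2, h2, smul_eq_mul]
  rw [show Real.sqrt τ * (∑ a, T a p * v a) * (Real.sqrt τ * ∑ b, T b j * v b)
    = (Real.sqrt τ * Real.sqrt τ) * ((∑ a, T a p * v a) * (∑ b, T b j * v b)) from by ring,
    Real.mul_self_sqrt hτ]

lemma mixedDiscriminant_key {n : ℕ} (Q : Fin n → Matrix (Fin n) (Fin n) ℝ)
    (hQ : ∀ i, (Q i).PosSemidef) (τ : Fin n → ℝ) (hτ : ∀ i, 0 ≤ τ i)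
    (T : Matrix (Fin n) (Fin n) ℝ) :
    0 ≤ mixedDiscriminant Q ∧
      mixedDiscriminant (fun i => τ i • (Tᵀ * Q i * T))
        = T.det ^ 2 * (∏ i, τ i) * mixedDiscriminant Q := by
  classical
  choose w hw using fun i => posSemidef_decomp (hQ i)
  have hQeq : mixedDiscriminant Q
      = ∑ κ : Fin n → Fin n, (Matrix.of fun p i => w i (κ i) p).det ^ 2 := by
    have : Q = fun i => ∑ k, Matrix.vecMulVec (w i k) (w i k) := funext hw
    rw [show mixedDiscriminant Q
        = mixedDiscriminant (fun i => ∑ k, Matrix.vecMulVec (w i k) (w i k)) from by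
      rw [← this], mixedDiscriminant_sum]
    exact Finset.sum_congr rfl fun κ _ => mixedDiscriminant_rankOne _
  have hscaled : mixedDiscriminant (fun i => τ i • (Tᵀ * Q i * T))
      = T.det ^ 2 * (∏ i, τ i)
          * ∑ κ : Fin n → Fin n, (Matrix.of fun p i => w i (κ i) p).det ^ 2 := by
    have heq : (fun i => τ i • (Tᵀ * Q i * T))
        = fun i => ∑ k, Matrix.vecMulVec (Real.sqrt (τ i) • (Tᵀ *ᵥ w i k))
            (Real.sqrt (τ i) • (Tᵀ *ᵥ w i k)) := by
      funext i
      rw [hw i, Finset.mul_sum, Finset.sum_mul, Finset.smul_sum]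
      exact Finset.sum_congr rfl fun k _ => smul_conj_vecMulVec (hτ i) T (w i k)
    rw [heq, mixedDiscriminant_sum]
    rw [Finset.mul_sum]
    refine Finset.sum_congr rfl fun κ _ => ?_
    rw [mixedDiscriminant_rankOne]
    have hU : (Matrix.of fun p i => (Real.sqrt (τ i) • (Tᵀ *ᵥ w i (κ i))) p)
        = Tᵀ * (Matrix.of fun p i => w i (κ i) p)
            * Matrix.diagonal (fun i => Real.sqrt (τ i)) := by
      ext p i
      rw [Matrix.mul_diagonal, Matrix.mul_apply]
      simp only [Matrix.of_apply, Pi.smul_apply, smul_eq_mul, Matrix.mulVec,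
        dotProduct, Matrix.transpose_apply, Finset.sum_mul]
      rw [Finset.mul_sum]
      exact Finset.sum_congr rfl fun a _ => by ring
    rw [hU, Matrix.det_mul, Matrix.det_mul, Matrix.det_transpose, Matrix.det_diagonal]
    rw [mul_pow, mul_pow, ← Finset.prod_pow]
    have : ∀ i ∈ Finset.univ, Real.sqrt (τ i) ^ 2 = τ i :=
      fun i _ => Real.sq_sqrt (hτ i)
    rw [Finset.prod_congr rfl this]
    ring
  refine ⟨?_, ?_⟩
  · rw [hQeq]; exact Finset.sum_nonneg fun κ _ => sq_nonneg _
  · rw [hscaled, hQeq]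

lemma posDef_sum_smul {n : ℕ} (τ : Fin n → ℝ) (hτ : ∀ i, 0 < τ i)
    (Q : Fin n → Matrix (Fin n) (Fin n) ℝ) (hQ : ∀ i, (Q i).PosDef) :
    (∑ i, τ i • Q i).PosDef := by
  refine Matrix.posDef_iff_dotProduct_mulVec.mpr ⟨?_, ?_⟩
  · unfold Matrix.IsHermitian
    rw [Matrix.conjTranspose_sum]
    exact Finset.sum_congr rfl fun i _ => by
      rw [Matrix.conjTranspose_smul, (hQ i).1]; simp
  · intro x hx
    have hne : Nonempty (Fin n) := by
      rcases Nat.eq_zero_or_pos n with h | h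
      · subst h; exact absurd (Subsingleton.elim x 0) hx
      · exact ⟨⟨0, h⟩⟩
    have h0 : ((∑ i, τ i • Q i) *ᵥ x) = ∑ i, τ i • (Q i *ᵥ x) := by
      ext j
      simp only [Matrix.mulVec, dotProduct, Matrix.sum_apply, Matrix.smul_apply,
        Finset.sum_apply, Pi.smul_apply, smul_eq_mul, Finset.sum_mul]
      rw [Finset.sum_comm]
      refine Finset.sum_congr rfl fun i _ => ?_
      rw [Finset.mul_sum]
      exact Finset.sum_congr rfl fun a _ => by ring
    have : dotProduct (star x) ((∑ i, τ i • Q i) *ᵥ x)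
        = ∑ i, τ i * dotProduct (star x) (Q i *ᵥ x) := by
      rw [h0]
      simp only [dotProduct, Finset.sum_apply, Pi.smul_apply, smul_eq_mul,
        Finset.mul_sum]
      rw [Finset.sum_comm]
      exact Finset.sum_congr rfl fun i _ => Finset.sum_congr rfl fun j _ => by ring
    rw [this]
    exact Finset.sum_pos (fun i _ => mul_pos (hτ i) ((hQ i).dotProduct_mulVec_pos hx)) Finset.univ_nonempty

lemma trace_eq_sum_eigenvalues {n : ℕ} {P : Matrix (Fin n) (Fin n) ℝ}
    (hP : P.IsHermitian) : P.trace = ∑ i, hP.eigenvalues i := by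
  conv_lhs => rw [hP.spectral_theorem, Unitary.conjStarAlgAut_apply]
  rw [Matrix.trace_mul_comm, ← Matrix.mul_assoc]
  have hU : (star (Matrix.IsHermitian.eigenvectorUnitary hP : Matrix (Fin n) (Fin n) ℝ))
      * (Matrix.IsHermitian.eigenvectorUnitary hP : Matrix (Fin n) (Fin n) ℝ) = 1 :=
    (Matrix.IsHermitian.eigenvectorUnitary hP).2.1
  rw [hU, one_mul, Matrix.trace_diagonal]
  simp

lemma det_le_one_of_posDef {n : ℕ} {P : Matrix (Fin n) (Fin n) ℝ}
    (hP : P.PosDef) (htr : P.trace = (n : ℝ)) : P.det ≤ 1 := by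
  rcases Nat.eq_zero_or_pos n with h | h
  · subst h
    simp [Matrix.det_fin_zero]
  have hH := hP.isHermitian
  have hdet : P.det = ∏ i, hH.eigenvalues i := by
    simpa using hH.det_eq_prod_eigenvalues
  have hsum : ∑ i, hH.eigenvalues i = (n : ℝ) := by
    rw [← trace_eq_sum_eigenvalues hH, htr]
  have hpos : ∀ i, 0 < hH.eigenvalues i := hP.eigenvalues_pos
  have hn : (0:ℝ) < n := Nat.cast_pos.mpr h
  have hw : ∑ _i : Fin n, (n : ℝ)⁻¹ = 1 := by
    simp [Finset.sum_const, mul_comm]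
    field_simp
  have hgm := Real.geom_mean_le_arith_mean_weighted Finset.univ
    (fun _ => (n : ℝ)⁻¹) hH.eigenvalues
    (fun i _ => by positivity) hw (fun i _ => (hpos i).le)
  rw [Real.finset_prod_rpow Finset.univ _ (fun i _ => (hpos i).le) _] at hgm
  have hrhs : ∑ i, (n : ℝ)⁻¹ * hH.eigenvalues i = 1 := by
    rw [← Finset.mul_sum, hsum]
    field_simp
  rw [hrhs] at hgm
  -- hgm : (∏ eig) ^ (n⁻¹ : ℝ) ≤ 1
  have hprodpos : 0 < ∏ i, hH.eigenvalues i := Finset.prod_pos fun i _ => hpos i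
  have := Real.rpow_le_rpow (Real.rpow_nonneg hprodpos.le _) hgm (le_of_lt hn)
  rw [← Real.rpow_mul hprodpos.le, inv_mul_cancel₀ (ne_of_gt hn), Real.rpow_one,
    Real.one_rpow] at this
  rw [hdet]
  exact this

theorem mixedDiscriminant_scaled_ge {n : ℕ}
    (Q : Fin n → Matrix (Fin n) (Fin n) ℝ)
    (hQ : ∀ i, (Q i).PosDef)
    (htr : ∑ i, (Q i).trace = (n : ℝ))
    (ξ : Fin n → ℝ) (hξH : ∑ i, ξ i = 0)
    (hmin : ∀ x : Fin n → ℝ, ∑ i, x i = 0 →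
      Real.log (Matrix.det (∑ i, Real.exp (ξ i) • Q i)) ≤
        Real.log (Matrix.det (∑ i, Real.exp (x i) • Q i)))
    (S : Matrix (Fin n) (Fin n) ℝ) (hS : IsUnit S.det)
    (hSS : Sᵀ * S = ∑ i, Real.exp (ξ i) • Q i) :
    mixedDiscriminant Q ≤
      mixedDiscriminant (fun i => Real.exp (ξ i) • ((S⁻¹)ᵀ * Q i * S⁻¹)) := by
  classical
  obtain ⟨hDQ0, hDB⟩ := mixedDiscriminant_key Q (fun i => (hQ i).posSemidef)
    (fun i => Real.exp (ξ i)) (fun i => (Real.exp_pos _).le) S⁻¹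
  rw [hDB]
  have hprod : (∏ i, Real.exp (ξ i)) = 1 := by
    rw [← Real.exp_sum, hξH, Real.exp_zero]
  have hPD : (∑ i, Real.exp (ξ i) • Q i).PosDef :=
    posDef_sum_smul _ (fun i => Real.exp_pos _) Q hQ
  have hd0 : 0 < (∑ i, Real.exp (ξ i) • Q i).det := hPD.det_pos
  have hQsum : (∑ i, Q i).PosDef := by
    have := posDef_sum_smul (fun _ => 1) (fun _ => one_pos) Q hQ
    simpa using this
  have htrsum : (∑ i, Q i).trace = (n : ℝ) := by rw [Matrix.trace_sum]; exact htr
  have h1 : (∑ i, Real.exp (ξ i) • Q i).det ≤ (∑ i, Q i).det := by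
    have hm := hmin 0 (by simp)
    simp only [Pi.zero_apply, Real.exp_zero, one_smul] at hm
    exact (Real.log_le_log_iff hd0 hQsum.det_pos).mp hm
  have hdle1 : (∑ i, Real.exp (ξ i) • Q i).det ≤ 1 :=
    h1.trans (det_le_one_of_posDef hQsum htrsum)
  have hdetS : S.det ^ 2 = (∑ i, Real.exp (ξ i) • Q i).det := by
    rw [← hSS, Matrix.det_mul, Matrix.det_transpose, sq]
  have hdetinv : (S⁻¹).det = S.det⁻¹ := by
    rw [Matrix.det_nonsing_inv, Ring.inverse_eq_inv]
  have hc : (1:ℝ) ≤ (S⁻¹).det ^ 2 := by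
    rw [hdetinv, ← one_div, div_pow, one_pow, hdetS]
    rw [le_div_iff₀ hd0, one_mul]
    exact hdle1
  rw [hprod, mul_one]
  exact le_mul_of_one_le_left hDQ0 hc
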